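/- Let Y, Y' be real-valued square-integrable random variables, X a random vector, and Z a random variable. Define the complex estimator Ŷ_{X,Z} = E[Y' | X, Z] and the simple estimator Ŷ_X = E[Y' | X]. If Cov(Ŷ_{X,Z}, Y | X) ≤ 0 almost surely, then E[(Ŷ_X − Y)²] ≤ E[(Ŷ_{X,Z} − Y)²]. -/

import Mathlib

open MeasureTheory ProbabilityTheory

lemma my_integrable_mul {Ω : Type*} {m0 : MeasurableSpace Ω} {μ : Measure Ω}
    {f g : Ω → ℝ} (hf : MemLp f 2 μ) (hg : MemLp g 2 μ) :
    Integrable (fun ω => f ω * g ω) μ := by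
  have := hg.smul hf (p := 2) (q := 2) (r := 1)
  rw [memLp_one_iff_integrable] at this
  simpa [Pi.smul_apply, smul_eq_mul, Pi.mul_def] using this

lemma my_memℒp_two_condexp {Ω : Type*} {m m0 : MeasurableSpace Ω} (hm : m ≤ m0)
    {μ : Measure Ω} [IsProbabilityMeasure μ] {f : Ω → ℝ} (hf : MemLp f 2 μ) :
    MemLp (μ[f|m]) 2 μ := by
  set g := ((condExpL2 ℝ ℝ hm (hf.toLp f) : lpMeas ℝ ℝ m 2 μ) : Lp ℝ 2 μ) with hg
  have hgf : (g : Ω → ℝ) =ᵐ[μ] μ[f|m] := by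
    refine ae_eq_condExp_of_forall_setIntegral_eq hm (hf.integrable one_le_two)
      (fun s _ _ => (integrable_condExpL2_of_isFiniteMeasure hm).integrableOn)
      (fun s hs hμs => ?_) (aestronglyMeasurable_condExpL2 hm _)
    rw [hg, integral_condExpL2_eq hm (hf.toLp f) hs hμs.ne]
    exact setIntegral_congr_ae (hm s hs) ((hf.coeFn_toLp).mono fun x hx _ => hx)
  exact (Lp.memLp g).ae_eq hgf

/-- If, conditional on `X`, the complex estimator
`Ŷ_{X,Z} = E[Y'|X,Z]` has nonpositive covariance with the true label `Y`,
then the simple estimator `Ŷ_X = E[Y'|X]` weakly outperforms it in MSE on `Y`.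
The σ-algebras `mX ⊆ mXZ` are those generated by `X` and by `(X, Z)`. -/
theorem simple_beats_complex_weak
    {Ω : Type*} {m0 : MeasurableSpace Ω} (μ : Measure Ω) [IsProbabilityMeasure μ]
    (mX mXZ : MeasurableSpace Ω) (h1 : mX ≤ mXZ) (h2 : mXZ ≤ m0)
    (Y Y' : Ω → ℝ) (hY : MemLp Y 2 μ) (hY' : MemLp Y' 2 μ)
    (hcov : ∀ᵐ ω ∂μ,
      (μ[fun ω' => (μ[Y'|mXZ]) ω' * Y ω' | mX]) ω
        - (μ[(μ[Y'|mXZ]) | mX]) ω * (μ[Y|mX]) ω ≤ 0) :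
    ∫ ω, ((μ[Y'|mX]) ω - Y ω) ^ 2 ∂μ ≤ ∫ ω, ((μ[Y'|mXZ]) ω - Y ω) ^ 2 ∂μ := by
  have hm : mX ≤ m0 := h1.trans h2
  set A := (μ[Y'|mXZ]) with hA_def
  set B := (μ[Y'|mX]) with hB_def
  set C := (μ[Y|mX]) with hC_def
  have hA : MemLp A 2 μ := my_memℒp_two_condexp h2 hY'
  have hB : MemLp B 2 μ := my_memℒp_two_condexp hm hY'
  have hC : MemLp C 2 μ := my_memℒp_two_condexp hm hY
  have htower : (μ[A|mX]) =ᵐ[μ] B := condExp_condExp_of_le h1 h2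
  have hYi : Integrable Y μ := hY.integrable one_le_two
  have hAi : Integrable A μ := hA.integrable one_le_two
  have intAY : Integrable (fun ω => A ω * Y ω) μ := my_integrable_mul hA hY
  have intBY : Integrable (fun ω => B ω * Y ω) μ := my_integrable_mul hB hY
  have intBA : Integrable (fun ω => B ω * A ω) μ := my_integrable_mul hB hA
  have intBB : Integrable (fun ω => B ω * B ω) μ := my_integrable_mul hB hB
  have intAC : Integrable (fun ω => (μ[A|mX]) ω * C ω) μ :=
    my_integrable_mul (my_memℒp_two_condexp hm hA) hC
  -- step 1 : ∫ B·A = ∫ B·B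
  have step1 : ∫ ω, B ω * A ω ∂μ = ∫ ω, B ω * B ω ∂μ := by
    have hmul : μ[B * A|mX] =ᵐ[μ] B * μ[A|mX] :=
      condExp_mul_of_stronglyMeasurable_left stronglyMeasurable_condExp intBA hAi
    calc ∫ ω, B ω * A ω ∂μ = ∫ ω, (μ[B * A|mX]) ω ∂μ := (integral_condExp hm).symm
      _ = ∫ ω, B ω * (μ[A|mX]) ω ∂μ := integral_congr_ae hmul
      _ = ∫ ω, B ω * B ω ∂μ :=
          integral_congr_ae (by filter_upwards [htower] with ω h; rw [h])
  -- step 2 : ∫ A·Y ≤ ∫ B·Y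
  have step2 : ∫ ω, A ω * Y ω ∂μ ≤ ∫ ω, B ω * Y ω ∂μ := by
    have e1 : ∫ ω, A ω * Y ω ∂μ = ∫ ω, (μ[fun ω' => A ω' * Y ω'|mX]) ω ∂μ :=
      (integral_condExp hm).symm
    have hmul : μ[B * Y|mX] =ᵐ[μ] B * μ[Y|mX] :=
      condExp_mul_of_stronglyMeasurable_left stronglyMeasurable_condExp intBY hYi
    have e2 : ∫ ω, B ω * Y ω ∂μ = ∫ ω, (μ[A|mX]) ω * C ω ∂μ := by
      calc ∫ ω, B ω * Y ω ∂μ = ∫ ω, (μ[B * Y|mX]) ω ∂μ := (integral_condExp hm).symm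
        _ = ∫ ω, B ω * C ω ∂μ := integral_congr_ae hmul
        _ = ∫ ω, (μ[A|mX]) ω * C ω ∂μ :=
            (integral_congr_ae (by filter_upwards [htower] with ω h; rw [h])).symm
    rw [e1, e2, ← sub_nonpos, ← integral_sub integrable_condExp intAC]
    exact integral_nonpos_of_ae hcov
  -- squares integrable
  have intAB2 : Integrable (fun ω => (A ω - B ω) ^ 2) μ := by
    have := my_integrable_mul (hA.sub hB) (hA.sub hB)
    simpa [sq, Pi.sub_apply] using this
  have intAY2 : Integrable (fun ω => (A ω - Y ω) ^ 2) μ := by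
    have := my_integrable_mul (hA.sub hY) (hA.sub hY)
    simpa [sq, Pi.sub_apply] using this
  have intBY2 : Integrable (fun ω => (B ω - Y ω) ^ 2) μ := by
    have := my_integrable_mul (hB.sub hY) (hB.sub hY)
    simpa [sq, Pi.sub_apply] using this
  have intD1 : Integrable (fun ω => B ω * A ω - B ω * B ω) μ := intBA.sub intBB
  have intD2 : Integrable (fun ω => A ω * Y ω - B ω * Y ω) μ := intAY.sub intBY
  rw [← sub_nonneg, ← integral_sub intAY2 intBY2]
  have hI : Integrable (fun ω => 2 * (B ω * A ω - B ω * B ω)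
      - 2 * (A ω * Y ω - B ω * Y ω)) μ := (intD1.const_mul 2).sub (intD2.const_mul 2)
  have e1 : ∫ ω, ((A ω - Y ω) ^ 2 - (B ω - Y ω) ^ 2) ∂μ
      = ∫ ω, (A ω - B ω) ^ 2 ∂μ
        + ∫ ω, (2 * (B ω * A ω - B ω * B ω) - 2 * (A ω * Y ω - B ω * Y ω)) ∂μ := by
    rw [← integral_add intAB2 hI]
    apply integral_congr_ae
    filter_upwards with ω
    ring
  have e2 : ∫ ω, (2 * (B ω * A ω - B ω * B ω) - 2 * (A ω * Y ω - B ω * Y ω)) ∂μ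
      = 2 * (∫ ω, (B ω * A ω) ∂μ - ∫ ω, (B ω * B ω) ∂μ)
        - 2 * (∫ ω, (A ω * Y ω) ∂μ - ∫ ω, (B ω * Y ω) ∂μ) := by
    rw [integral_sub (intD1.const_mul 2) (intD2.const_mul 2), integral_const_mul,
      integral_const_mul, integral_sub intBA intBB, integral_sub intAY intBY]
  rw [e1, e2]
  have hsq : 0 ≤ ∫ ω, (A ω - B ω) ^ 2 ∂μ := integral_nonneg fun ω => sq_nonneg _
  linarith [sub_nonpos.mpr step2]
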